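/- Let 1 < q₂ ≤ q₁ < ∞, A ∈ R^{m×N}, and set r = q₂(q₁−1)/(q₁(q₂−1)). For any s with 1 ≤ s ≤ N^{1/r}, ρ_{q₂, s^r}(A) ≥ s^{−r} ρ_{q₁, s^r}(A). -/

import Mathlib

open Finset Matrix

noncomputable def l1 {N : ℕ} (z : Fin N → ℝ) : ℝ := ∑ i, |z i|
noncomputable def lq {N : ℕ} (q : ℝ) (z : Fin N → ℝ) : ℝ := (∑ i, |z i| ^ q) ^ (1/q)
noncomputable def l2 {m : ℕ} (v : Fin m → ℝ) : ℝ := Real.sqrt (∑ i, (v i)^2)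
noncomputable def linf {N : ℕ} (z : Fin N → ℝ) : ℝ := ⨆ i, |z i|
open scoped Classical in
noncomputable def l0 {N : ℕ} (z : Fin N → ℝ) : ℕ := (Finset.univ.filter (fun i => z i ≠ 0)).card
noncomputable def sparsityQ {N : ℕ} (q : ℝ) (z : Fin N → ℝ) : ℝ := (l1 z / lq q z) ^ (q/(q-1))
noncomputable def cmsv {m N : ℕ} (q s : ℝ) (A : Matrix (Fin m) (Fin N) ℝ) : ℝ :=
  sInf { r | ∃ z : Fin N → ℝ, z ≠ 0 ∧ sparsityQ q z ≤ s ∧ r = l2 (A.mulVec z) / lq q z }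

lemma lq_nonneg {N : ℕ} (q : ℝ) (z : Fin N → ℝ) : 0 ≤ lq q z :=
  Real.rpow_nonneg (Finset.sum_nonneg fun i _ => Real.rpow_nonneg (abs_nonneg _) _) _

lemma l1_pos {N : ℕ} {z : Fin N → ℝ} (hz : z ≠ 0) : 0 < l1 z := by
  obtain ⟨i, hi⟩ := Function.ne_iff.mp hz
  exact Finset.sum_pos' (fun j _ => abs_nonneg _)
    ⟨i, Finset.mem_univ i, abs_pos.mpr (by simpa using hi)⟩

lemma lq_pos {N : ℕ} {q : ℝ} (hq : 0 < q) {z : Fin N → ℝ} (hz : z ≠ 0) : 0 < lq q z := by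
  obtain ⟨i, hi⟩ := Function.ne_iff.mp hz
  refine Real.rpow_pos_of_pos ?_ _
  exact Finset.sum_pos' (fun j _ => Real.rpow_nonneg (abs_nonneg _) _)
    ⟨i, Finset.mem_univ i, Real.rpow_pos_of_pos (abs_pos.mpr (by simpa using hi)) _⟩

/-- interpolation -/
lemma lq_interp {N : ℕ} (z : Fin N → ℝ) {q₁ q₂ : ℝ} (hq₂ : 1 < q₂) (hq : q₂ ≤ q₁) :
    lq q₂ z ≤ (l1 z) ^ (1 - q₁ * (q₂ - 1) / (q₂ * (q₁ - 1))) *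
      (lq q₁ z) ^ (q₁ * (q₂ - 1) / (q₂ * (q₁ - 1))) := by
  have hq₁ : 1 < q₁ := lt_of_lt_of_le hq₂ hq
  rcases eq_or_lt_of_le hq with heq | hlt
  · subst heq
    have hθ : q₂ * (q₂ - 1) / (q₂ * (q₂ - 1)) = 1 :=
      div_self (by nlinarith : (0:ℝ) < q₂ * (q₂ - 1)).ne'
    rw [hθ, sub_self, Real.rpow_zero, one_mul, Real.rpow_one]
  · -- q₂ < q₁
    set α : ℝ := (q₁ - q₂) / (q₁ - 1) with hα
    have hq₁0 : (0:ℝ) < q₁ - 1 := by linarith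
    have hα0 : 0 < α := div_pos (by linarith) hq₁0
    have hα1 : α < 1 := (div_lt_one hq₁0).mpr (by linarith)
    have hq₂α : 0 < q₂ - α := by linarith
    have hconj : Real.HolderConjugate (1/α) (q₁ / (q₂ - α)) := by
      refine Real.holderConjugate_iff.mpr ⟨?_, ?_⟩
      · rw [lt_div_iff₀ hα0]; linarith
      · rw [one_div, inv_inv, inv_div]
        rw [hα]
        have h1 : (q₁:ℝ) ≠ 0 := by positivity
        have h2 : q₁ - 1 ≠ 0 := ne_of_gt hq₁0
        field_simp
        ring
    have holder := Real.inner_le_Lp_mul_Lq (Finset.univ)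
      (fun i => |z i| ^ α) (fun i => |z i| ^ (q₂ - α)) hconj
    simp only [abs_of_nonneg (Real.rpow_nonneg (abs_nonneg _) _)] at holder
    have e1 : ∀ i : Fin N, |z i| ^ α * |z i| ^ (q₂ - α) = |z i| ^ q₂ := by
      intro i
      rw [← Real.rpow_add' (abs_nonneg _) (by positivity : α + (q₂ - α) ≠ 0),
        show α + (q₂ - α) = q₂ by ring]
    have e2 : ∀ i : Fin N, (|z i| ^ α) ^ (1/α : ℝ) = |z i| := by
      intro i
      rw [← Real.rpow_mul (abs_nonneg _), mul_one_div, div_self hα0.ne', Real.rpow_one]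
    have e3 : ∀ i : Fin N, (|z i| ^ (q₂ - α)) ^ (q₁ / (q₂ - α) : ℝ) = |z i| ^ q₁ := by
      intro i
      rw [← Real.rpow_mul (abs_nonneg _), mul_div_cancel₀ _ hq₂α.ne']
    simp only [e1, e2, e3, one_div_one_div, one_div_div] at holder
    -- holder : ∑ |z|^q₂ ≤ (∑ |z|)^α * (∑ |z|^q₁)^((q₂-α)/q₁)
    have hsum1 : (0:ℝ) ≤ ∑ i, |z i| := Finset.sum_nonneg fun i _ => abs_nonneg _
    have hsumq : (0:ℝ) ≤ ∑ i, |z i| ^ q₁ :=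
      Finset.sum_nonneg fun i _ => Real.rpow_nonneg (abs_nonneg _) _
    have hq₂0 : (0:ℝ) < q₂ := by linarith
    have step := Real.rpow_le_rpow
      (Finset.sum_nonneg fun (i : Fin N) _ => Real.rpow_nonneg (abs_nonneg _) q₂)
      holder (le_of_lt (one_div_pos.mpr hq₂0))
    rw [Real.mul_rpow (Real.rpow_nonneg hsum1 _) (Real.rpow_nonneg hsumq _),
      ← Real.rpow_mul hsum1, ← Real.rpow_mul hsumq] at step
    unfold lq l1
    refine le_trans step ?_
    have eθ1 : α * (1/q₂) = 1 - q₁ * (q₂ - 1) / (q₂ * (q₁ - 1)) := by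
      rw [hα]; field_simp; ring
    have eθ2 : (q₂ - α) / q₁ * (1/q₂) = (1/q₁) * (q₁ * (q₂ - 1) / (q₂ * (q₁ - 1))) := by
      rw [hα]; field_simp; ring
    rw [div_one, eθ1, eθ2, Real.rpow_mul hsumq]

lemma l1_single {N : ℕ} (i : Fin N) : l1 (Pi.single i (1:ℝ)) = 1 := by
  unfold l1
  simp [Pi.single_apply, apply_ite abs]

lemma lq_single {N : ℕ} {q : ℝ} (hq : 0 < q) (i : Fin N) : lq q (Pi.single i (1:ℝ)) = 1 := by
  unfold lq
  have h : ∀ j : Fin N, |(Pi.single i (1:ℝ) : Fin N → ℝ) j| ^ q = if j = i then (1:ℝ) else 0 := by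
    intro j
    rcases eq_or_ne j i with h | h <;>
      simp [h, Pi.single_apply, Real.zero_rpow hq.ne', Real.one_rpow]
  simp [h, Real.one_rpow]

theorem stmt8 {m N : ℕ} (A : Matrix (Fin m) (Fin N) ℝ) (q₁ q₂ s r : ℝ)
    (hq₂ : 1 < q₂) (hq : q₂ ≤ q₁)
    (hr : r = q₂ * (q₁ - 1) / (q₁ * (q₂ - 1)))
    (hs1 : 1 ≤ s) (hs2 : s ≤ (N : ℝ) ^ (1/r)) :
    s ^ (-r) * cmsv q₁ (s ^ r) A ≤ cmsv q₂ (s ^ r) A := by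
  have hq₁ : 1 < q₁ := lt_of_lt_of_le hq₂ hq
  have hq10 : (0:ℝ) < q₁ - 1 := by linarith
  have hq20 : (0:ℝ) < q₂ - 1 := by linarith
  set θ : ℝ := q₁ * (q₂ - 1) / (q₂ * (q₁ - 1)) with hθdef
  have hθpos : 0 < θ := div_pos (by nlinarith) (by nlinarith)
  have hθ1 : θ ≤ 1 := by
    rw [hθdef, div_le_one (by nlinarith)]; nlinarith
  have hrpos : 0 < r := by
    rw [hr]; exact div_pos (by nlinarith) (by nlinarith)
  have hs0 : (0:ℝ) < s := lt_of_lt_of_le one_pos hs1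
  have hsr1 : 1 ≤ s ^ r := Real.one_le_rpow hs1 hrpos.le
  have hsrpos : 0 < s ^ r := Real.rpow_pos_of_pos hs0 _
  have hN : 0 < N := by
    rcases Nat.eq_zero_or_pos N with h0 | h; swap; · exact h
    exfalso
    rw [h0] at hs2
    rw [Nat.cast_zero, Real.zero_rpow (by positivity : 1/r ≠ 0)] at hs2
    linarith
  -- the witness
  set i₀ : Fin N := ⟨0, hN⟩
  set z₀ : Fin N → ℝ := Pi.single i₀ 1 with hz₀
  have hz₀ne : z₀ ≠ 0 := by
    intro h
    have := congrFun h i₀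
    simp [hz₀, Pi.single_apply] at this
  have hsp₀ : sparsityQ q₂ z₀ ≤ s ^ r := by
    unfold sparsityQ
    rw [l1_single, lq_single (by linarith : (0:ℝ) < q₂), div_one, Real.one_rpow]
    exact hsr1
  -- bddBelow of the q₁-set
  have hbdd : BddBelow { x | ∃ z : Fin N → ℝ, z ≠ 0 ∧ sparsityQ q₁ z ≤ s ^ r ∧
      x = l2 (A.mulVec z) / lq q₁ z } := by
    refine ⟨0, ?_⟩
    rintro x ⟨w, -, -, rfl⟩
    exact div_nonneg (Real.sqrt_nonneg _) (lq_nonneg _ _)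
  unfold cmsv
  refine le_csInf ⟨l2 (A.mulVec z₀) / lq q₂ z₀, z₀, hz₀ne, hsp₀, rfl⟩ ?_
  rintro x ⟨z, hz, hsp, rfl⟩
  have hL1 : 0 < l1 z := l1_pos hz
  have hL2q : 0 < lq q₂ z := lq_pos (by linarith) hz
  have hL1q : 0 < lq q₁ z := lq_pos (by linarith) hz
  have hI := lq_interp z hq₂ hq
  rw [← hθdef] at hI
  set u : ℝ := l1 z / lq q₁ z with hu
  have hupos : 0 < u := div_pos hL1 hL1q
  -- Step 1 : u ^ θ ≤ l1 z / lq q₂ z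
  have h1 : u ^ θ ≤ l1 z / lq q₂ z := by
    rw [hu, Real.div_rpow hL1.le hL1q.le,
      div_le_div_iff₀ (Real.rpow_pos_of_pos hL1q θ) hL2q]
    calc l1 z ^ θ * lq q₂ z
        ≤ l1 z ^ θ * (l1 z ^ (1 - θ) * lq q₁ z ^ θ) :=
          mul_le_mul_of_nonneg_left hI (Real.rpow_nonneg hL1.le _)
      _ = l1 z * lq q₁ z ^ θ := by
          rw [← mul_assoc, ← Real.rpow_add hL1, show θ + (1 - θ) = 1 by ring,
            Real.rpow_one]
  -- Step 2 : sparsity bound for q₁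
  have hA' : u ^ (q₁ / (q₁ - 1)) ≤ s ^ r := by
    have h2 : (u ^ θ) ^ (q₂ / (q₂ - 1)) ≤ (l1 z / lq q₂ z) ^ (q₂ / (q₂ - 1)) :=
      Real.rpow_le_rpow (Real.rpow_nonneg hupos.le θ) h1 (by positivity)
    rw [← Real.rpow_mul hupos.le,
      show θ * (q₂ / (q₂ - 1)) = q₁ / (q₁ - 1) by
        rw [hθdef]; field_simp] at h2
    exact h2.trans hsp
  have hA : sparsityQ q₁ z ≤ s ^ r := hA'
  -- Step 3 : u ≤ (s^r) ^ ((q₁-1)/q₁)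
  have hub : u ≤ (s ^ r) ^ ((q₁ - 1) / q₁) := by
    have h3 : (u ^ (q₁ / (q₁ - 1))) ^ ((q₁ - 1) / q₁) ≤ (s ^ r) ^ ((q₁ - 1) / q₁) :=
      Real.rpow_le_rpow (Real.rpow_nonneg hupos.le _) hA' (by positivity)
    rwa [← Real.rpow_mul hupos.le,
      show q₁ / (q₁ - 1) * ((q₁ - 1) / q₁) = 1 by field_simp, Real.rpow_one] at h3
  -- Step 4 : lq q₂ z ≤ s^r * lq q₁ z
  have hB : lq q₂ z ≤ s ^ r * lq q₁ z := by
    have hL1le : l1 z ≤ (s ^ r) ^ ((q₁ - 1) / q₁) * lq q₁ z := by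
      rw [hu, div_le_iff₀ hL1q] at hub; exact hub
    have h5 : l1 z ^ (1 - θ) ≤ ((s ^ r) ^ ((q₁ - 1) / q₁) * lq q₁ z) ^ (1 - θ) :=
      Real.rpow_le_rpow hL1.le hL1le (by linarith)
    have h6 : lq q₂ z ≤ ((s ^ r) ^ ((q₁ - 1) / q₁ * (1 - θ))) * lq q₁ z := by
      calc lq q₂ z ≤ l1 z ^ (1 - θ) * lq q₁ z ^ θ := hI
        _ ≤ ((s ^ r) ^ ((q₁ - 1) / q₁ * (1 - θ)) * lq q₁ z ^ (1 - θ)) * lq q₁ z ^ θ := by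
            refine mul_le_mul_of_nonneg_right ?_ (Real.rpow_nonneg hL1q.le _)
            rwa [Real.mul_rpow (Real.rpow_nonneg hsrpos.le _) hL1q.le,
              ← Real.rpow_mul hsrpos.le] at h5
        _ = ((s ^ r) ^ ((q₁ - 1) / q₁ * (1 - θ))) * lq q₁ z := by
            rw [mul_assoc, ← Real.rpow_add hL1q, show (1 - θ) + θ = 1 by ring,
              Real.rpow_one]
    refine h6.trans (mul_le_mul_of_nonneg_right ?_ hL1q.le)
    calc (s ^ r) ^ ((q₁ - 1) / q₁ * (1 - θ)) ≤ (s ^ r) ^ (1:ℝ) := by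
          refine Real.rpow_le_rpow_of_exponent_le hsr1 ?_
          have e1 : (q₁ - 1) / q₁ ≤ 1 := by
            rw [div_le_one (by linarith)]; linarith
          have e2 : (0:ℝ) ≤ (q₁ - 1) / q₁ := by positivity
          nlinarith
      _ = s ^ r := Real.rpow_one _
  -- conclude
  have hmem : l2 (A.mulVec z) / lq q₁ z ∈ { x | ∃ w : Fin N → ℝ, w ≠ 0 ∧
      sparsityQ q₁ w ≤ s ^ r ∧ x = l2 (A.mulVec w) / lq q₁ w } := ⟨z, hz, hA, rfl⟩
  have h4 : cmsv q₁ (s ^ r) A ≤ l2 (A.mulVec z) / lq q₁ z := csInf_le hbdd hmem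
  have hl2 : 0 ≤ l2 (A.mulVec z) := Real.sqrt_nonneg _
  calc s ^ (-r) * cmsv q₁ (s ^ r) A
      ≤ s ^ (-r) * (l2 (A.mulVec z) / lq q₁ z) :=
        mul_le_mul_of_nonneg_left h4 (Real.rpow_nonneg hs0.le _)
    _ = l2 (A.mulVec z) / (s ^ r * lq q₁ z) := by
        rw [Real.rpow_neg hs0.le, inv_mul_eq_div, div_div, mul_comm]
    _ ≤ l2 (A.mulVec z) / lq q₂ z :=
        div_le_div_of_nonneg_left hl2 hL2q hB
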